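/- (Determinacy of winning regions.) Let A be an n-player game arena with finite state set S, let φ ⊆ S^ω be a Muller objective, let I ⊆ [1,n] be a subset of players, and let J = [1,n] \ I. Then ⟨⟨I⟩⟩(φ) = S \ ⟨⟨J⟩⟩(¬φ), where ¬φ = S^ω \ φ. -/

import Mathlib

/-- The set of states occurring infinitely often in the infinite sequence `ρ`. -/
def infOcc {S : Type*} (ρ : ℕ → S) : Set S := {t | ∀ N, ∃ k ≥ N, ρ k = t}

/-- Büchi objective: `inf(ρ) ∩ B ≠ ∅`. -/
def Buchi {S : Type*} (B : Set S) : Set (ℕ → S) := {ρ | (infOcc ρ ∩ B).Nonempty}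

/-- co-Büchi objective: `inf(ρ) ∩ B = ∅`. -/
def CoBuchi {S : Type*} (B : Set S) : Set (ℕ → S) := {ρ | infOcc ρ ∩ B = ∅}

/-- Parity objective: the minimum color seen infinitely often is even. -/
def ParityObj {S : Type*} (p : S → ℕ) : Set (ℕ → S) :=
  {ρ | Even (sInf (p '' infOcc ρ))}

/-- Streett objective given a set of pairs. -/
def Streett {S : Type*} (T : Set (Set S × Set S)) : Set (ℕ → S) :=
  ⋂ FG ∈ T, (CoBuchi FG.1 ∪ Buchi FG.2)

/-- Rabin objective given a set of pairs. -/
def Rabin {S : Type*} (R : Set (Set S × Set S)) : Set (ℕ → S) :=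
  ⋃ FG ∈ R, (Buchi FG.1 ∩ CoBuchi FG.2)

/-- A Muller objective: membership depends only on the set of states visited infinitely often. -/
def IsMuller {S : Type*} (φ : Set (ℕ → S)) : Prop :=
  ∃ F : Set (Set S), φ = {ρ | infOcc ρ ∈ F}


/-- An `n`-player game arena: the decomposition `(S_i)` of the state set is given by the
`owner` function, `E` is the transition relation, and every state has an `E`-successor. -/
structure Arena (n : ℕ) (S : Type*) where
  owner : S → Fin n
  E : S → S → Prop
  succ_exists : ∀ s, ∃ t, E s t

namespace Arena

variable {n : ℕ} {S : Type*}

/-- A play: an infinite `E`-path. -/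
def IsPlay (A : Arena n S) (ρ : ℕ → S) : Prop := ∀ k, A.E (ρ k) (ρ (k + 1))

/-- A (total representation of a) strategy `σ : S* S_i → S`: given the history `h` and the
current state `s` (so the full finite sequence is `h · s`), it picks an `E`-successor of `s`. -/
def IsStrategy (A : Arena n S) (σ : List S → S → S) : Prop :=
  ∀ h s, A.E s (σ h s)

/-- The history `ρ 0 … ρ (k-1)`. -/
def hist (ρ : ℕ → S) (k : ℕ) : List S := List.ofFn (fun j : Fin k => ρ j)

/-- The play `ρ` is consistent with strategy `σ` of player `i`: whenever the current state
belongs to player `i`, the next state is the one chosen by `σ`. -/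
def Consistent (A : Arena n S) (i : Fin n) (σ : List S → S → S) (ρ : ℕ → S) : Prop :=
  ∀ k, A.owner (ρ k) = i → ρ (k + 1) = σ (hist ρ k) (ρ k)

/-- `Out_s(σ_i)`: plays starting at `s` consistent with player `i`'s strategy `σ`. -/
def Out (A : Arena n S) (i : Fin n) (σ : List S → S → S) (s : S) : Set (ℕ → S) :=
  {ρ | ρ 0 = s ∧ A.IsPlay ρ ∧ A.Consistent i σ ρ}

/-- `Out_s(Σ_P)`: plays starting at `s` consistent with the strategies of all players in `P`. -/
def OutP (A : Arena n S) (P : Set (Fin n)) (σ : Fin n → List S → S → S) (s : S) :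
    Set (ℕ → S) :=
  {ρ | ρ 0 = s ∧ A.IsPlay ρ ∧ ∀ i ∈ P, A.Consistent i (σ i) ρ}

/-- The winning region `⟨⟨P⟩⟩(φ)`: states from which the players in `P` have a strategy
profile forcing `φ`. -/
def Win (A : Arena n S) (P : Set (Fin n)) (φ : Set (ℕ → S)) : Set S :=
  {s | ∃ σ : Fin n → List S → S → S,
    (∀ i ∈ P, A.IsStrategy (σ i)) ∧ A.OutP P σ s ⊆ φ}

/-- One step of unfolding a full strategy profile: extend the history and move to
the state chosen by the owner of the current state. -/
def step (A : Arena n S) (σ : Fin n → List S → S → S) : List S × S → List S × S :=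
  fun hc => (hc.1 ++ [hc.2], σ (A.owner hc.2) hc.1 hc.2)

/-- `Out_s(Σ)` for a full strategy profile `Σ` is a unique play; `outcome` is that play. -/
def outcome (A : Arena n S) (σ : Fin n → List S → S → S) (s : S) (k : ℕ) : S :=
  ((A.step σ)^[k] ([], s)).2

end Arena

/-- The payoff profile of a play `ρ` with respect to the objective profile `Φ`. -/
noncomputable def payoff {n : ℕ} {S : Type*} (Φ : Fin n → Set (ℕ → S)) (ρ : ℕ → S) :
    Fin n → Bool :=
  fun i => @decide (ρ ∈ Φ i) (Classical.propDecidable _)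

/-- Player `i`'s preference order on payoff profiles. -/
def Pref {n : ℕ} (i : Fin n) (u u' : Fin n → Bool) : Prop :=
  u i < u' i ∨ (u i = u' i ∧ (∀ j, u' j ≤ u j) ∧ ∃ j, u' j < u j)

namespace Arena

variable {n : ℕ} {S : Type*}

/-- `Σ` is a secure equilibrium at `s`: no player `i` has a deviation yielding a payoff
profile preferred by `i`. -/
def IsSE (A : Arena n S) (Φ : Fin n → Set (ℕ → S)) (σ : Fin n → List S → S → S)
    (s : S) : Prop :=
  ∀ i : Fin n, ¬ ∃ σ' : List S → S → S, A.IsStrategy σ' ∧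
    Pref i (payoff Φ (A.outcome σ s)) (payoff Φ (A.outcome (Function.update σ i σ') s))

/-- `SE_v`: states at which some secure equilibrium yields the payoff profile `v`. -/
def SEset (A : Arena n S) (Φ : Fin n → Set (ℕ → S)) (v : Fin n → Bool) : Set S :=
  {s | ∃ σ : Fin n → List S → S → S, (∀ i, A.IsStrategy (σ i)) ∧
    A.IsSE Φ σ s ∧ payoff Φ (A.outcome σ s) = v}

end Arena

/-- `φ_W = ⋂_{i ∈ W} φ_i` where `W = {i | v_i = 1}`. -/
def phiW {n : ℕ} {S : Type*} (Φ : Fin n → Set (ℕ → S)) (v : Fin n → Bool) : Set (ℕ → S) :=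
  ⋂ i ∈ {i : Fin n | v i = true}, Φ i

/-- `φ_L = ⋃_{i ∈ L} φ_i` where `L = {i | v_i = 0}`. -/
def phiL {n : ℕ} {S : Type*} (Φ : Fin n → Set (ℕ → S)) (v : Fin n → Bool) : Set (ℕ → S) :=
  ⋃ i ∈ {i : Fin n | v i = false}, Φ i

/-- The set `A_v` of states from which, for each player `i`, the other players can retaliate. -/
def Arena.Av {n : ℕ} {S : Type*} (A : Arena n S) (Φ : Fin n → Set (ℕ → S))
    (v : Fin n → Bool) : Set S :=
  (⋂ w ∈ {i : Fin n | v i = true},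
      A.Win ({w}ᶜ) (phiW Φ v ∪ phiL Φ v ∪ (Φ w)ᶜ)) ∩
  (⋂ l ∈ {i : Fin n | v i = false},
      A.Win ({l}ᶜ) ((phiW Φ v ∪ phiL Φ v) ∩ (Φ l)ᶜ))
noncomputable section
namespace MullerDet

attribute [local instance] Classical.propDecidable

variable {S : Type*}

/-! ### Preliminaries on histories and `infOcc` -/

def shift (ρ : ℕ → S) (t : ℕ) (i : ℕ) : S := ρ (t + i)

theorem hist_zero (ρ : ℕ → S) : Arena.hist ρ 0 = [] := rfl

theorem hist_succ (ρ : ℕ → S) (k : ℕ) :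
    Arena.hist ρ (k + 1) = Arena.hist ρ k ++ [ρ k] := by
  show List.ofFn (fun j : Fin (k+1) => ρ j) = _
  rw [List.ofFn_succ', List.concat_eq_append]
  simp [Arena.hist]

theorem hist_one (ρ : ℕ → S) : Arena.hist ρ 1 = [ρ 0] := by
  simp [hist_succ, hist_zero]

theorem mem_hist {ρ : ℕ → S} {k : ℕ} {y : S} :
    y ∈ Arena.hist ρ k ↔ ∃ i, i < k ∧ ρ i = y := by
  simp only [Arena.hist, List.mem_ofFn, Set.mem_range]
  constructor
  · rintro ⟨i, hi⟩; exact ⟨i, i.isLt, hi⟩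
  · rintro ⟨i, hi, h⟩; exact ⟨⟨i, hi⟩, h⟩

theorem hist_add (ρ : ℕ → S) (t m : ℕ) :
    Arena.hist ρ (t + m) = Arena.hist ρ t ++ Arena.hist (shift ρ t) m := by
  induction m with
  | zero => simp [hist_zero]
  | succ m ih => rw [← Nat.add_assoc, hist_succ, ih, hist_succ, List.append_assoc]; rfl

theorem infOcc_shift (ρ : ℕ → S) (t : ℕ) : infOcc (shift ρ t) = infOcc ρ := by
  ext x
  constructor
  · intro h N
    obtain ⟨k, hk, he⟩ := h N
    exact ⟨t + k, le_trans hk (Nat.le_add_left _ _), he⟩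
  · intro h N
    obtain ⟨k, hk, he⟩ := h (t + N)
    exact ⟨k - t, by omega, by unfold shift; rwa [Nat.add_sub_cancel' (by omega)]⟩

theorem exists_infOcc_of_often [Finite S] {ρ : ℕ → S} {X : Set S}
    (h : ∀ N, ∃ k, N ≤ k ∧ ρ k ∈ X) : ∃ x, x ∈ X ∧ x ∈ infOcc ρ := by
  by_contra hc
  push_neg at hc
  have : ∀ x : S, ∃ N, x ∈ X → ∀ k, N ≤ k → ρ k ≠ x := by
    intro x
    by_cases hx : x ∈ X
    · obtain ⟨N, hN⟩ : ∃ N, ¬ ∃ k ≥ N, ρ k = x := by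
        have := hc x hx; unfold infOcc at this
        simpa [infOcc] using this
      push_neg at hN
      exact ⟨N, fun _ k hk => hN k hk⟩
    · exact ⟨0, fun h' => absurd h' hx⟩
  choose N hN using this
  have hbdd : ∃ B, ∀ x : S, N x ≤ B := by
    obtain ⟨B, hB⟩ := (Set.finite_range N).bddAbove
    exact ⟨B, fun x => hB (Set.mem_range_self x)⟩
  obtain ⟨B, hB⟩ := hbdd
  obtain ⟨k, hk, hkX⟩ := h B
  exact hN (ρ k) hkX k (le_trans (hB _) hk) rfl

theorem infOcc_nonempty [Finite S] (ρ : ℕ → S) : ∃ x, x ∈ infOcc ρ := by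
  obtain ⟨x, -, hx⟩ := exists_infOcc_of_often (ρ := ρ) (X := Set.univ)
    (fun N => ⟨N, le_refl _, Set.mem_univ _⟩)
  exact ⟨x, hx⟩

theorem infOcc_subset {ρ : ℕ → S} {U : Set S} (h : ∀ k, ρ k ∈ U) : infOcc ρ ⊆ U := by
  intro x hx
  obtain ⟨k, -, he⟩ := hx 0
  exact he ▸ h k

/-! ### Two-player games on subarenas -/

variable (E : S → S → Prop) (c : S → Bool) (F : Set (Set S))

/-- Player `p` wins if the set visited infinitely often satisfies `Good p`. -/
def Good (p : Bool) (X : Set S) : Prop := if p then X ∈ F else X ∉ F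

/-- A subarena : every state has a successor inside. -/
def Sub (U : Set S) : Prop := ∀ s ∈ U, ∃ t ∈ U, E s t

def PlayIn (U : Set S) (ρ : ℕ → S) : Prop :=
  (∀ k, ρ k ∈ U) ∧ ∀ k, E (ρ k) (ρ (k + 1))

def StratOn (p : Bool) (U : Set S) (σ : List S → S → S) : Prop :=
  ∀ h s, s ∈ U → c s = p → σ h s ∈ U ∧ E s (σ h s)

def Con (p : Bool) (σ : List S → S → S) (ρ : ℕ → S) : Prop :=
  ∀ k, c (ρ k) = p → ρ (k + 1) = σ (Arena.hist ρ k) (ρ k)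

def WinsFrom (p : Bool) (U : Set S) (σ : List S → S → S) (s : S) : Prop :=
  ∀ ρ, PlayIn E U ρ → ρ 0 = s → Con c p σ ρ → Good F p (infOcc ρ)

def WinIn (p : Bool) (U : Set S) : Set S :=
  {s | s ∈ U ∧ ∃ σ, StratOn E c p U σ ∧ WinsFrom E c F p U σ s}

variable {E c F}

theorem good_not_both {p : Bool} {X : Set S} (h1 : Good F p X) (h2 : Good F (!p) X) : False := by
  cases p <;> simp [Good] at h1 h2 <;> tauto

theorem good_of_not_good {p : Bool} {X : Set S} (h : ¬ Good F p X) : Good F (!p) X := by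
  cases p <;> simpa [Good] using h

theorem bool_eq_not {b p : Bool} (h : ¬ b = p) : b = !p := by
  cases b <;> cases p <;> simp_all

theorem winIn_subset {p : Bool} {U : Set S} : WinIn E c F p U ⊆ U := fun _ h => h.1

/-! ### Default strategy -/

def dflt (E : S → S → Prop) (U : Set S) : S → S :=
  fun s => if h : ∃ t ∈ U, E s t then h.choose else s

theorem dflt_spec {U : Set S} (hU : Sub E U) {s : S} (hs : s ∈ U) :
    dflt E U s ∈ U ∧ E s (dflt E U s) := by
  unfold dflt
  rw [dif_pos (hU s hs)]
  exact ⟨(hU s hs).choose_spec.1, (hU s hs).choose_spec.2⟩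

theorem dflt_stratOn {p : Bool} {U : Set S} (hU : Sub E U) :
    StratOn E c p U (fun _ s => dflt E U s) := fun _ s hs _ => dflt_spec hU hs

/-! ### Building a play from a total move function -/

def bp (f : List S → S → S) (s : S) : ℕ → List S × S
  | 0 => ([], s)
  | k + 1 => ((bp f s k).1 ++ [(bp f s k).2], f (bp f s k).1 (bp f s k).2)

def play (f : List S → S → S) (s : S) (k : ℕ) : S := (bp f s k).2

theorem play_zero (f : List S → S → S) (s : S) : play f s 0 = s := rfl

theorem bp_hist (f : List S → S → S) (s : S) (k : ℕ) :
    (bp f s k).1 = Arena.hist (play f s) k := by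
  induction k with
  | zero => simp [bp, hist_zero]
  | succ k ih => rw [hist_succ, ← ih]; rfl

theorem play_succ (f : List S → S → S) (s : S) (k : ℕ) :
    play f s (k + 1) = f (Arena.hist (play f s) k) (play f s k) := by
  rw [← bp_hist]; rfl

def mix (c : S → Bool) (p : Bool) (σ₁ σ₂ : List S → S → S) : List S → S → S :=
  fun h x => if c x = p then σ₁ h x else σ₂ h x

theorem mix_pos {p : Bool} {σ₁ σ₂ : List S → S → S} {h : List S} {x : S}
    (hx : c x = p) : mix c p σ₁ σ₂ h x = σ₁ h x := if_pos hx

theorem mix_neg {p : Bool} {σ₁ σ₂ : List S → S → S} {h : List S} {x : S}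
    (hx : ¬ c x = p) : mix c p σ₁ σ₂ h x = σ₂ h x := if_neg hx

/-- The two winning regions are disjoint. -/
theorem winIn_not_both {p : Bool} {U : Set S} {s : S}
    (h1 : s ∈ WinIn E c F p U) (h2 : s ∈ WinIn E c F (!p) U) : False := by
  obtain ⟨hsU, σ₁, hσ₁, hw₁⟩ := h1
  obtain ⟨-, σ₂, hσ₂, hw₂⟩ := h2
  set ρ := play (mix c p σ₁ σ₂) s with hρ
  have hmem : ∀ k, ρ k ∈ U := by
    intro k
    induction k with
    | zero => exact hsU
    | succ k ih =>
      rw [hρ, play_succ]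
      by_cases hck : c (ρ k) = p
      · rw [mix_pos hck]; exact (hσ₁ _ _ ih hck).1
      · rw [mix_neg hck]; exact (hσ₂ _ _ ih (bool_eq_not hck)).1
  have hplay : PlayIn E U ρ := by
    refine ⟨hmem, fun k => ?_⟩
    rw [hρ, play_succ]
    by_cases hck : c (ρ k) = p
    · rw [mix_pos hck]; exact (hσ₁ _ _ (hmem k) hck).2
    · rw [mix_neg hck]; exact (hσ₂ _ _ (hmem k) (bool_eq_not hck)).2
  have hcon1 : Con c p σ₁ ρ := by
    intro k hk
    rw [hρ, play_succ, mix_pos hk]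
  have hcon2 : Con c (!p) σ₂ ρ := by
    intro k hk
    have hne : ¬ c (ρ k) = p := by cases p <;> simp_all
    rw [hρ, play_succ, mix_neg hne]
  exact good_not_both (hw₁ ρ hplay rfl hcon1) (hw₂ ρ hplay rfl hcon2)

/-! ### Uniformization -/

theorem hist_headD {ρ : ℕ → S} {k : ℕ} (x : S) (hk : 0 < k) :
    (Arena.hist ρ k).headD x = ρ 0 := by
  cases k with
  | zero => omega
  | succ m => show (List.ofFn (fun j : Fin (m+1) => ρ j)).headD x = ρ 0
              rw [List.ofFn_succ]; rfl

theorem uniformize {p : Bool} {U W : Set S} (hU : Sub E U)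
    (h : ∀ w ∈ W, ∃ σ, StratOn E c p U σ ∧ WinsFrom E c F p U σ w) :
    ∃ σ, StratOn E c p U σ ∧ ∀ w ∈ W, WinsFrom E c F p U σ w := by
  have h2 : ∃ σf : S → List S → S → S, ∀ w, StratOn E c p U (σf w) ∧
      (w ∈ W → WinsFrom E c F p U (σf w) w) := by
    choose g hg using h
    refine ⟨fun w => if hw : w ∈ W then g w hw else fun _ s => dflt E U s, fun w => ?_⟩
    dsimp only
    by_cases hw : w ∈ W
    · rw [dif_pos hw]; exact ⟨(hg w hw).1, fun _ => (hg w hw).2⟩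
    · rw [dif_neg hw]; exact ⟨dflt_stratOn hU, fun h' => absurd h' hw⟩
  obtain ⟨σf, hσf⟩ := h2
  refine ⟨fun h' x => σf (h'.headD x) h' x, fun h' x hx hcx => (hσf _).1 _ _ hx hcx, ?_⟩
  intro w hw ρ hplay h0 hcon
  have hcon' : Con c p (σf w) ρ := by
    intro k hk
    rw [hcon k hk]
    show σf ((Arena.hist ρ k).headD (ρ k)) (Arena.hist ρ k) (ρ k) = _
    rcases Nat.eq_zero_or_pos k with rfl | hkpos
    · rw [hist_zero]; simp [h0]
    · rw [hist_headD _ hkpos, h0]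
  exact (hσf w).2 hw ρ hplay h0 hcon'

/-! ### Trap transfer -/

theorem winIn_trap {p : Bool} {U V : Set S} (hVU : V ⊆ U) (hU : Sub E U)
    (htrap : ∀ s ∈ V, ¬ c s = p → ∀ t ∈ U, E s t → t ∈ V) :
    WinIn E c F p V ⊆ WinIn E c F p U := by
  intro s hs
  obtain ⟨hsV, σ, hσ, hw⟩ := hs
  refine ⟨hVU hsV, fun h x => if x ∈ V then σ h x else dflt E U x, ?_, ?_⟩
  · intro h x hxU hcx
    dsimp only
    by_cases hxV : x ∈ V
    · rw [if_pos hxV]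
      exact ⟨hVU (hσ h x hxV hcx).1, (hσ h x hxV hcx).2⟩
    · rw [if_neg hxV]; exact dflt_spec hU hxU
  · intro ρ hplay h0 hcon
    have hV : ∀ k, ρ k ∈ V := by
      intro k
      induction k with
      | zero => rw [h0]; exact hsV
      | succ k ih =>
        by_cases hck : c (ρ k) = p
        · rw [hcon k hck]
          dsimp only
          rw [if_pos ih]
          exact (hσ _ _ ih hck).1
        · exact htrap _ ih hck _ (hplay.1 (k+1)) (hplay.2 k)
    have hconV : Con c p σ ρ := by
      intro k hk
      rw [hcon k hk]
      dsimp only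
      rw [if_pos (hV k)]
    exact hw ρ ⟨hV, hplay.2⟩ h0 hconV

/-! ### Splitting histories at the first visit of a set -/

def suffFrom (B : Set S) : List S → Option (List S)
  | [] => none
  | x :: xs => if x ∈ B then some (x :: xs) else suffFrom B xs

theorem suffFrom_none {B : Set S} {l : List S} (h : ∀ x ∈ l, x ∉ B) :
    suffFrom B l = none := by
  induction l with
  | nil => rfl
  | cons x xs ih =>
    rw [suffFrom, if_neg (h x List.mem_cons_self)]
    exact ih fun y hy => h y (List.mem_cons_of_mem _ hy)

theorem suffFrom_app {B : Set S} {l₁ l₂ : List S} {y : S}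
    (h1 : ∀ x ∈ l₁, x ∉ B) (hy : y ∈ B) :
    suffFrom B (l₁ ++ y :: l₂) = some (y :: l₂) := by
  induction l₁ with
  | nil => rw [List.nil_append, suffFrom, if_pos hy]
  | cons x xs ih =>
    rw [List.cons_append, suffFrom, if_neg (h1 x List.mem_cons_self)]
    exact ih fun z hz => h1 z (List.mem_cons_of_mem _ hz)

/-- Composite strategy: follow `σ0` until the play first enters `B`, then follow the
(uniform) strategy `σB` which wins from everywhere in `B`. -/
theorem switch {p : Bool} {U B : Set S} (hU : Sub E U) {σB σ0 : List S → S → S}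
    (hB : StratOn E c p U σB) (h0 : StratOn E c p U σ0)
    (hwinB : ∀ w ∈ B, WinsFrom E c F p U σB w)
    {s : S} (hs : s ∈ U)
    (havoid : ∀ ρ, PlayIn E U ρ → ρ 0 = s → Con c p σ0 ρ → (∀ t, ρ t ∉ B) →
      Good F p (infOcc ρ)) :
    s ∈ WinIn E c F p U := by
  refine ⟨hs, fun h x => (suffFrom B (h ++ [x])).elim (σ0 h x) (fun l => σB l.dropLast x),
    ?_, ?_⟩
  · intro h x hxU hcx
    show (suffFrom B (h ++ [x])).elim (σ0 h x) (fun l => σB l.dropLast x) ∈ U ∧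
      E x ((suffFrom B (h ++ [x])).elim (σ0 h x) (fun l => σB l.dropLast x))
    cases hsf : suffFrom B (h ++ [x]) with
    | none => exact h0 h x hxU hcx
    | some l => exact hB _ x hxU hcx
  · intro ρ hplay h0' hcon
    by_cases hhit : ∃ t, ρ t ∈ B
    · set t₀ := Nat.find hhit with ht₀def
      have ht₀ : ρ t₀ ∈ B := Nat.find_spec hhit
      have hmin : ∀ i, i < t₀ → ρ i ∉ B := fun i hi => Nat.find_min hhit hi
      have hsplit : ∀ k, t₀ ≤ k →
          suffFrom B (Arena.hist ρ (k + 1)) =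
            some (Arena.hist (shift ρ t₀) (k - t₀) ++ [ρ k]) := by
        intro k hk
        have hdecomp : Arena.hist ρ (k + 1) =
            Arena.hist ρ t₀ ++ (ρ t₀ :: List.ofFn fun i : Fin (k - t₀) => shift ρ t₀ (i + 1)) := by
          have h1 : t₀ + (k - t₀ + 1) = k + 1 := by omega
          rw [← h1, hist_add]
          congr 1
          show Arena.hist (shift ρ t₀) (k - t₀ + 1) = _
          rw [Arena.hist, List.ofFn_succ]
          rfl
        rw [hdecomp, suffFrom_app (fun x hx => by
          obtain ⟨i, hi, rfl⟩ := mem_hist.1 hx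
          exact hmin i hi) ht₀]
        congr 1
        have : ρ t₀ :: (List.ofFn fun i : Fin (k - t₀) => shift ρ t₀ (i + 1)) =
            Arena.hist (shift ρ t₀) (k - t₀ + 1) := by
          rw [Arena.hist, List.ofFn_succ]; rfl
        rw [this, hist_succ]
        have : shift ρ t₀ (k - t₀) = ρ k := by unfold shift; congr 1; omega
        rw [this]
      have hconB : Con c p σB (shift ρ t₀) := by
        intro j hj
        have hck : c (ρ (t₀ + j)) = p := hj
        have := hcon (t₀ + j) hck
        show ρ (t₀ + j + 1) = _
        rw [this]
        show (suffFrom B (Arena.hist ρ (t₀ + j) ++ [ρ (t₀ + j)])).elim _ _ = _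
        rw [← hist_succ, hsplit (t₀ + j) (by omega)]
        show σB (Arena.hist (shift ρ t₀) (t₀ + j - t₀) ++ [ρ (t₀ + j)]).dropLast _ = _
        rw [List.dropLast_concat]
        congr 2
        omega
      have hgood := hwinB _ ht₀ (shift ρ t₀)
        ⟨fun k => hplay.1 _, fun k => hplay.2 _⟩ rfl hconB
      rwa [infOcc_shift] at hgood
    · push_neg at hhit
      have hcon0 : Con c p σ0 ρ := by
        intro k hk
        rw [hcon k hk]
        show (suffFrom B (Arena.hist ρ k ++ [ρ k])).elim _ _ = _
        rw [← hist_succ, suffFrom_none (fun x hx => by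
          obtain ⟨i, hi, rfl⟩ := mem_hist.1 hx
          exact hhit i)]
        rfl
      exact havoid ρ hplay h0' hcon0 hhit

/-! ### Attractors -/

section AttrSec

variable (E : S → S → Prop) (c : S → Bool) (p : Bool) (U X : Set S)

def lvl : ℕ → Set S
  | 0 => X
  | n + 1 => lvl n ∪ {s | s ∈ U ∧
      ((c s = p ∧ ∃ t, t ∈ U ∧ E s t ∧ t ∈ lvl n) ∨
       (¬ c s = p ∧ ∀ t, t ∈ U → E s t → t ∈ lvl n))}

def attr : Set S := {s | ∃ n, s ∈ lvl E c p U X n}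

theorem lvl_mono : Monotone (lvl E c p U X) :=
  monotone_nat_of_le_succ (fun _ => Set.subset_union_left)

theorem subset_attr : X ⊆ attr E c p U X := fun s hs => ⟨0, hs⟩

theorem lvl_sub (hXU : X ⊆ U) : ∀ n, lvl E c p U X n ⊆ U := by
  intro n
  induction n with
  | zero => exact hXU
  | succ n ih =>
    rintro s (h | h)
    · exact ih h
    · exact h.1

theorem attr_sub (hXU : X ⊆ U) : attr E c p U X ⊆ U := by
  rintro s ⟨n, hn⟩
  exact lvl_sub E c p U X hXU n hn

/-- The attractor rank. -/
def rank (s : S) : ℕ := if h : s ∈ attr E c p U X then Nat.find h else 0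

theorem rank_le {s : S} {n : ℕ} (h : s ∈ lvl E c p U X n) : rank E c p U X s ≤ n := by
  unfold rank
  rw [dif_pos ⟨n, h⟩]
  exact Nat.find_min' _ h

theorem lvl_rank {s : S} (hs : s ∈ attr E c p U X) :
    s ∈ lvl E c p U X (rank E c p U X s) := by
  unfold rank
  rw [dif_pos hs]
  exact Nat.find_spec hs

theorem attr_step_own {s : S} (hs : s ∈ attr E c p U X) (hX : s ∉ X) (hc : c s = p) :
    ∃ t, (t ∈ U ∧ E s t) ∧ t ∈ attr E c p U X ∧ rank E c p U X t < rank E c p U X s := by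
  set n := rank E c p U X s with hn
  have hsl : s ∈ lvl E c p U X n := lvl_rank E c p U X hs
  cases hnn : n with
  | zero => rw [hnn] at hsl; exact absurd hsl hX
  | succ m =>
    rw [hnn] at hsl
    rcases hsl with h | h
    · have := rank_le E c p U X h; omega
    · rcases h.2 with ⟨-, t, htU, htE, htm⟩ | ⟨hcs, -⟩
      · exact ⟨t, ⟨htU, htE⟩, ⟨m, htm⟩, lt_of_le_of_lt (rank_le E c p U X htm) (by omega)⟩
      · exact absurd hc hcs

theorem attr_step_opp {s : S} (hs : s ∈ attr E c p U X) (hX : s ∉ X) (hc : ¬ c s = p) :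
    ∀ t, t ∈ U → E s t → t ∈ attr E c p U X ∧ rank E c p U X t < rank E c p U X s := by
  set n := rank E c p U X s with hn
  have hsl : s ∈ lvl E c p U X n := lvl_rank E c p U X hs
  cases hnn : n with
  | zero => rw [hnn] at hsl; exact absurd hsl hX
  | succ m =>
    rw [hnn] at hsl
    rcases hsl with h | h
    · have := rank_le E c p U X h; omega
    · rcases h.2 with ⟨hcs, -⟩ | ⟨-, hall⟩
      · exact absurd hcs hc
      · intro t htU htE
        exact ⟨⟨m, hall t htU htE⟩,
          lt_of_le_of_lt (rank_le E c p U X (hall t htU htE)) (by omega)⟩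

/-- A chosen rank-decreasing move inside the attractor. -/
def attrMove (s : S) : S :=
  if h : s ∈ attr E c p U X ∧ s ∉ X ∧ c s = p then
    (attr_step_own E c p U X h.1 h.2.1 h.2.2).choose
  else dflt E U s

theorem attrMove_spec {s : S} (h : s ∈ attr E c p U X ∧ s ∉ X ∧ c s = p) :
    (attrMove E c p U X s ∈ U ∧ E s (attrMove E c p U X s)) ∧
      attrMove E c p U X s ∈ attr E c p U X ∧
      rank E c p U X (attrMove E c p U X s) < rank E c p U X s := by
  unfold attrMove
  rw [dif_pos h]
  exact (attr_step_own E c p U X h.1 h.2.1 h.2.2).choose_spec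

theorem attrMove_stratOn (hU : Sub E U) :
    StratOn E c p U (fun _ x => attrMove E c p U X x) := by
  intro h x hxU hcx
  by_cases hx : x ∈ attr E c p U X ∧ x ∉ X ∧ c x = p
  · exact (attrMove_spec E c p U X hx).1
  · show attrMove E c p U X x ∈ U ∧ E x (attrMove E c p U X x)
    unfold attrMove
    rw [dif_neg hx]
    exact dflt_spec hU hxU

theorem not_attr_own {s : S} (hsU : s ∈ U) (hns : s ∉ attr E c p U X) (hc : c s = p) :
    ∀ t, t ∈ U → E s t → t ∉ attr E c p U X := by
  rintro t htU htE ⟨n, hn⟩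
  exact hns ⟨n + 1, Or.inr ⟨hsU, Or.inl ⟨hc, t, htU, htE, hn⟩⟩⟩

theorem bdd_of_finite [Finite S] {A : ℕ → Set S} (hmono : Monotone A) {T : Set S}
    (h : ∀ t ∈ T, ∃ n, t ∈ A n) : ∃ N, ∀ t ∈ T, t ∈ A N := by
  have hT : T.Finite := Set.toFinite T
  refine ⟨hT.toFinset.sup (fun t => if ht : ∃ n, t ∈ A n then Nat.find ht else 0), ?_⟩
  intro t ht
  have htT : t ∈ hT.toFinset := hT.mem_toFinset.2 ht
  have hex : ∃ n, t ∈ A n := h t ht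
  have hle := Finset.le_sup (f := fun t => if ht : ∃ n, t ∈ A n then Nat.find ht else 0) htT
  rw [dif_pos hex] at hle
  exact hmono hle (Nat.find_spec hex)

theorem not_attr_opp [Finite S] (hU : Sub E U) {s : S} (hsU : s ∈ U)
    (hns : s ∉ attr E c p U X) (hc : ¬ c s = p) :
    ∃ t, t ∈ U ∧ E s t ∧ t ∉ attr E c p U X := by
  by_contra hcon
  push_neg at hcon
  have hall : ∀ t ∈ {t | t ∈ U ∧ E s t}, ∃ n, t ∈ lvl E c p U X n := by
    rintro t ⟨htU, htE⟩
    exact hcon t htU htE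
  obtain ⟨N, hN⟩ := bdd_of_finite (lvl_mono E c p U X) hall
  exact hns ⟨N + 1, Or.inr ⟨hsU, Or.inr ⟨hc, fun t htU htE => hN t ⟨htU, htE⟩⟩⟩⟩

theorem sub_diff [Finite S] (hU : Sub E U) : Sub E (U \ attr E c p U X) := by
  rintro s ⟨hsU, hns⟩
  by_cases hc : c s = p
  · obtain ⟨t, htU, htE⟩ := hU s hsU
    exact ⟨t, ⟨htU, not_attr_own E c p U X hsU hns hc t htU htE⟩, htE⟩
  · obtain ⟨t, htU, htE, htn⟩ := not_attr_opp E c p U X hU hsU hns hc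
    exact ⟨t, ⟨htU, htn⟩, htE⟩

/-- Any play from the attractor in which player `p` makes the attractor moves
reaches `X`. -/
theorem attr_reach {ρ : ℕ → S} (hplay : PlayIn E U ρ) (h0 : ρ 0 ∈ attr E c p U X)
    (hmv : ∀ t, ρ t ∈ attr E c p U X → ρ t ∉ X → c (ρ t) = p →
      ρ (t + 1) = attrMove E c p U X (ρ t)) :
    ∃ t, ρ t ∈ X := by
  by_contra hc
  push_neg at hc
  have key : ∀ t, ρ t ∈ attr E c p U X →
      ρ (t + 1) ∈ attr E c p U X ∧
        rank E c p U X (ρ (t + 1)) < rank E c p U X (ρ t) := by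
    intro t ht
    by_cases hcs : c (ρ t) = p
    · rw [hmv t ht (hc t) hcs]
      exact (attrMove_spec E c p U X ⟨ht, hc t, hcs⟩).2
    · exact attr_step_opp E c p U X ht (hc t) hcs (ρ (t + 1)) (hplay.1 (t + 1)) (hplay.2 t)
  have hall : ∀ t, ρ t ∈ attr E c p U X := by
    intro t
    induction t with
    | zero => exact h0
    | succ t ih => exact (key t ih).1
  have hdec : ∀ t, rank E c p U X (ρ t) + t ≤ rank E c p U X (ρ 0) := by
    intro t
    induction t with
    | zero => omega
    | succ t ih =>
      have := (key t (hall t)).2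
      omega
  have := hdec (rank E c p U X (ρ 0) + 1)
  omega

end AttrSec

/-! ### The rotation machine -/

def rstep (Xof Vof : ℕ → Set S) : ℕ × List S → S → ℕ × List S := fun st x =>
  if x ∈ Xof st.1 then (st.1 + 1, if x ∈ Vof (st.1 + 1) then [x] else [])
  else if x ∈ Vof st.1 then (st.1, st.2 ++ [x])
  else (st.1, [])

def mach (Xof Vof : ℕ → Set S) (l : List S) : ℕ × List S :=
  l.foldl (rstep Xof Vof) (0, [])

theorem mach_append (Xof Vof : ℕ → Set S) (l : List S) (x : S) :
    mach Xof Vof (l ++ [x]) = rstep Xof Vof (mach Xof Vof l) x := by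
  simp [mach, List.foldl_append]

theorem rstep_fst (Xof Vof : ℕ → Set S) (st : ℕ × List S) (x : S) :
    (rstep Xof Vof st x).1 = if x ∈ Xof st.1 then st.1 + 1 else st.1 := by
  unfold rstep
  by_cases h1 : x ∈ Xof st.1
  · rw [if_pos h1, if_pos h1]
  · rw [if_neg h1, if_neg h1]
    by_cases h2 : x ∈ Vof st.1
    · rw [if_pos h2]
    · rw [if_neg h2]

theorem rstep_snd_X {Xof Vof : ℕ → Set S} {st : ℕ × List S} {x : S}
    (hx : x ∈ Xof st.1) :
    (rstep Xof Vof st x).2 = if x ∈ Vof (st.1 + 1) then [x] else [] := by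
  unfold rstep
  rw [if_pos hx]

theorem rstep_snd_V {Xof Vof : ℕ → Set S} {st : ℕ × List S} {x : S}
    (hnx : x ∉ Xof st.1) (hv : x ∈ Vof st.1) :
    (rstep Xof Vof st x).2 = st.2 ++ [x] := by
  unfold rstep
  rw [if_neg hnx, if_pos hv]

theorem rstep_snd_A {Xof Vof : ℕ → Set S} {st : ℕ × List S} {x : S}
    (hnx : x ∉ Xof st.1) (hnv : x ∉ Vof st.1) :
    (rstep Xof Vof st x).2 = [] := by
  unfold rstep
  rw [if_neg hnx, if_neg hnv]

/-! ### The rotation strategy -/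

theorem rotation [Finite S] {U : Set S} (hU : Sub E U) {b : Bool}
    {k : ℕ} (hk : 0 < k) (Xof : ℕ → Set S)
    (hXper : ∀ m, Xof m = Xof (m % k))
    (hgood : ∀ I : Set S, I ⊆ U → (∀ j, j < k → ∃ x, x ∈ I ∧ x ∈ Xof j) →
      Good F b I)
    (σof : ℕ → List S → S → S)
    (hσS : ∀ m, StratOn E c b (U \ attr E c b U (Xof m)) (σof m))
    (hσW : ∀ m, ∀ v ∈ U \ attr E c b U (Xof m),
      WinsFrom E c F b (U \ attr E c b U (Xof m)) (σof m) v)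
    {s : S} (hs : s ∈ U) : s ∈ WinIn E c F b U := by
  suffices hsuf : ∀ Vof : ℕ → Set S, (∀ m, Vof m = U \ attr E c b U (Xof m)) →
      s ∈ WinIn E c F b U by
    exact hsuf (fun m => U \ attr E c b U (Xof m)) (fun m => rfl)
  intro Vof hVof
  refine ⟨hs, fun h x =>
    if x ∈ Vof (mach Xof Vof (h ++ [x])).1
    then σof (mach Xof Vof (h ++ [x])).1 ((mach Xof Vof (h ++ [x])).2).dropLast x
    else attrMove E c b U (Xof (mach Xof Vof (h ++ [x])).1) x, ?_, ?_⟩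
  · -- the strategy is legal
    intro h x hxU hcx
    dsimp only
    by_cases hv : x ∈ Vof (mach Xof Vof (h ++ [x])).1
    · rw [if_pos hv]
      have hv' : x ∈ U \ attr E c b U (Xof (mach Xof Vof (h ++ [x])).1) := by
        rw [← hVof]; exact hv
      have := hσS (mach Xof Vof (h ++ [x])).1 ((mach Xof Vof (h ++ [x])).2).dropLast x hv' hcx
      exact ⟨this.1.1, this.2⟩
    · rw [if_neg hv]
      exact attrMove_stratOn E c b U (Xof (mach Xof Vof (h ++ [x])).1) hU h x hxU hcx
  · -- the strategy wins
    intro ρ hplay hρ0 hcon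
    set md : ℕ → ℕ := fun t => (mach Xof Vof (Arena.hist ρ (t + 1))).1 with hmd
    set gl : ℕ → List S := fun t => (mach Xof Vof (Arena.hist ρ (t + 1))).2 with hgl
    have hmach0 : mach Xof Vof (Arena.hist ρ 1) = rstep Xof Vof (0, []) (ρ 0) := by
      rw [hist_one]
      rfl
    have hmachS : ∀ t, mach Xof Vof (Arena.hist ρ (t + 2)) =
        rstep Xof Vof (mach Xof Vof (Arena.hist ρ (t + 1))) (ρ (t + 1)) := by
      intro t
      rw [hist_succ ρ (t + 1), mach_append]
    have hmdS : ∀ t, md (t + 1) =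
        if ρ (t + 1) ∈ Xof (md t) then md t + 1 else md t := by
      intro t
      rw [hmd]
      dsimp only
      rw [show t + 1 + 1 = t + 2 from rfl, hmachS t, rstep_fst]
    have hstep : ∀ t, (ρ (t + 1) ∈ Xof (md t) ∧ md (t + 1) = md t + 1) ∨
        (ρ (t + 1) ∉ Xof (md t) ∧ md (t + 1) = md t) := by
      intro t
      by_cases hx : ρ (t + 1) ∈ Xof (md t)
      · exact Or.inl ⟨hx, by rw [hmdS t, if_pos hx]⟩
      · exact Or.inr ⟨hx, by rw [hmdS t, if_neg hx]⟩
    have hmono : ∀ t t', t ≤ t' → md t ≤ md t' := by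
      intro t t' htt
      induction t', htt using Nat.le_induction with
      | base => exact le_refl _
      | succ t' htt ih =>
        rcases hstep t' with ⟨-, h⟩ | ⟨-, h⟩ <;> omega
    have hmd0 : md 0 ≤ 1 := by
      rw [hmd]
      dsimp only
      rw [hmach0, rstep_fst]
      by_cases hx : ρ 0 ∈ Xof (0, ([] : List S)).1
      · rw [if_pos hx]
      · rw [if_neg hx]; omega
    have hconEq : ∀ t, c (ρ t) = b → ρ (t + 1) =
        (if ρ t ∈ Vof (md t) then σof (md t) (gl t).dropLast (ρ t)
         else attrMove E c b U (Xof (md t)) (ρ t)) := by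
      intro t hct
      rw [hcon t hct]
      dsimp only
      rw [← hist_succ ρ t, hmd, hgl]
    by_cases hbdd : ∃ N, ∀ t, md t ≤ N
    · -- CASE B : the mode stabilizes
      obtain ⟨N, hN⟩ := hbdd
      set m' : ℕ := Nat.findGreatest (fun v => ∃ t, md t = v) N with hm'
      have hPm : ∃ t, md t = m' := by
        rw [hm']
        exact Nat.findGreatest_spec (P := fun v => ∃ t, md t = v) (hN 0) ⟨0, rfl⟩
      have hmax : ∀ t, md t ≤ m' := by
        intro t
        rw [hm']
        exact Nat.le_findGreatest (hN t) ⟨t, rfl⟩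
      set t₁ := Nat.find hPm with ht₁def
      have ht₁ : md t₁ = m' := Nat.find_spec hPm
      have hminim : ∀ i, i < t₁ → md i ≠ m' := fun i hi => Nat.find_min hPm hi
      have htop : ∀ t, t₁ ≤ t → md t = m' :=
        fun t ht => le_antisymm (hmax t) (ht₁ ▸ hmono t₁ t ht)
      have hnb : ∀ t, t₁ ≤ t → ρ (t + 1) ∉ Xof m' := by
        intro t ht hmem
        rcases hstep t with ⟨-, hb⟩ | ⟨hno, -⟩
        · have := hmax (t + 1)
          rw [hb, htop t ht] at this
          omega
        · rw [htop t ht] at hno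
          exact hno hmem
      have hnX : ∀ t, t₁ < t → ρ t ∉ Xof m' := by
        intro t ht
        cases t with
        | zero => omega
        | succ u => exact hnb u (by omega)
      have hVm : ∀ t, t₁ < t → ρ t ∈ Vof m' := by
        intro t ht
        rw [hVof]
        refine ⟨hplay.1 t, fun hattr => ?_⟩
        have hmv : ∀ d, shift ρ t d ∈ attr E c b U (Xof m') → shift ρ t d ∉ Xof m' →
            c (shift ρ t d) = b →
            shift ρ t (d + 1) = attrMove E c b U (Xof m') (shift ρ t d) := by
          intro d hda hdx hdc
          have h2 := hconEq (t + d) hdc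
          rw [htop (t + d) (by omega)] at h2
          have hnV : ρ (t + d) ∉ Vof m' := by
            rw [hVof]
            exact fun hm => hm.2 hda
          rw [if_neg hnV] at h2
          exact h2
        obtain ⟨d, hd⟩ := attr_reach E c b U (Xof m') (ρ := shift ρ t)
          ⟨fun i => hplay.1 _, fun i => hplay.2 _⟩ hattr hmv
        exact hnX (t + d) (by omega) hd
      -- the basis for the final σ-simulation
      have hbase : gl t₁ = [] ∨ (gl t₁ = [ρ t₁] ∧ ρ t₁ ∈ Vof m') := by
        have hglS : ∀ t, gl (t + 1) = (rstep Xof Vof (mach Xof Vof (Arena.hist ρ (t + 1))) (ρ (t + 1))).2 := by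
          intro t
          rw [hgl]
          dsimp only
          rw [show t + 1 + 1 = t + 2 from rfl, hmachS t]
        cases ht₁c : t₁ with
        | zero =>
          have hm0 : md 0 = m' := by rw [← ht₁c]; exact ht₁
          have hgl0 : gl 0 = (rstep Xof Vof (0, []) (ρ 0)).2 := by
            rw [hgl]
            dsimp only
            rw [hmach0]
          by_cases hx : ρ 0 ∈ Xof (0, ([] : List S)).1
          · -- bump at time 0, so md 0 = 1
            have hmd0' : md 0 = 1 := by
              rw [hmd]
              dsimp only
              rw [hmach0, rstep_fst, if_pos hx]
            rw [hgl0, rstep_snd_X hx]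
            by_cases hv : ρ 0 ∈ Vof ((0, ([] : List S)).1 + 1)
            · right
              refine ⟨by rw [if_pos hv], ?_⟩
              have : (0, ([] : List S)).1 + 1 = m' := by rw [← hm0, hmd0']
              rwa [this] at hv
            · left; rw [if_neg hv]
          · have hmd0' : md 0 = 0 := by
              rw [hmd]
              dsimp only
              rw [hmach0, rstep_fst, if_neg hx]
            by_cases hv : ρ 0 ∈ Vof ((0, ([] : List S)).1)
            · right
              refine ⟨by rw [hgl0, rstep_snd_V hx hv]; rfl, ?_⟩
              have : (0, ([] : List S)).1 = m' := by rw [← hm0, hmd0']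
              rwa [this] at hv
            · left
              rw [hgl0, rstep_snd_A hx hv]
        | succ u =>
          have hu : md u ≠ m' := by
            have := hminim u (by omega)
            exact this
          have ht₁u : md (u + 1) = m' := by rw [← ht₁c]; exact ht₁
          rcases hstep u with ⟨hxu, hbu⟩ | ⟨-, hnu⟩
          · -- bump at t₁
            have hglu : gl (u + 1) = if ρ (u + 1) ∈ Vof (md u + 1) then [ρ (u + 1)] else [] := by
              rw [hglS u]
              have hxu' : ρ (u + 1) ∈ Xof ((mach Xof Vof (Arena.hist ρ (u + 1))).1) := hxu
              rw [rstep_snd_X hxu']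
            have hmm : md u + 1 = m' := by omega
            rw [hmm] at hglu
            by_cases hv : ρ (u + 1) ∈ Vof m'
            · right
              rw [hglu, if_pos hv]
              exact ⟨rfl, hv⟩
            · left
              rw [hglu, if_neg hv]
          · rw [hnu] at ht₁u
            exact absurd ht₁u hu
      obtain ⟨r₀, hr₀t₁, hg0, hVr⟩ : ∃ r₀, t₁ ≤ r₀ ∧ gl r₀ = [ρ r₀] ∧
          ∀ t, r₀ ≤ t → ρ t ∈ Vof m' := by
        rcases hbase with hb | hb
        · refine ⟨t₁ + 1, by omega, ?_, fun t ht => hVm t (by omega)⟩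
          rw [hgl]
          dsimp only
          rw [show t₁ + 1 + 1 = t₁ + 2 from rfl, hmachS t₁]
          have hnx : ρ (t₁ + 1) ∉ Xof ((mach Xof Vof (Arena.hist ρ (t₁ + 1))).1) := by
            show ρ (t₁ + 1) ∉ Xof (md t₁)
            rw [htop t₁ le_rfl]
            exact hnb t₁ le_rfl
          have hvv : ρ (t₁ + 1) ∈ Vof ((mach Xof Vof (Arena.hist ρ (t₁ + 1))).1) := by
            show ρ (t₁ + 1) ∈ Vof (md t₁)
            rw [htop t₁ le_rfl]
            exact hVm (t₁ + 1) (by omega)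
          rw [rstep_snd_V hnx hvv]
          have : (mach Xof Vof (Arena.hist ρ (t₁ + 1))).2 = gl t₁ := by rw [hgl]
          rw [this, hb, List.nil_append]
        · refine ⟨t₁, le_rfl, hb.1, fun t ht => ?_⟩
          rcases Nat.eq_or_lt_of_le ht with rfl | hlt
          · exact hb.2
          · exact hVm t hlt
      have hglinv : ∀ t, r₀ ≤ t → gl t = Arena.hist (shift ρ r₀) (t + 1 - r₀) := by
        intro t ht
        induction t, ht using Nat.le_induction with
        | base =>
          rw [hg0]
          have : r₀ + 1 - r₀ = 1 := by omega
          rw [this, hist_one]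
          rfl
        | succ t ht ih =>
          have hgt : gl (t + 1) = gl t ++ [ρ (t + 1)] := by
            rw [hgl]
            dsimp only
            rw [show t + 1 + 1 = t + 2 from rfl, hmachS t]
            have hnx : ρ (t + 1) ∉ Xof ((mach Xof Vof (Arena.hist ρ (t + 1))).1) := by
              show ρ (t + 1) ∉ Xof (md t)
              rw [htop t (by omega)]
              exact hnb t (by omega)
            have hvv : ρ (t + 1) ∈ Vof ((mach Xof Vof (Arena.hist ρ (t + 1))).1) := by
              show ρ (t + 1) ∈ Vof (md t)
              rw [htop t (by omega)]
              exact hVr (t + 1) (by omega)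
            rw [rstep_snd_V hnx hvv]
          rw [hgt, ih]
          have h1 : t + 1 + 1 - r₀ = (t + 1 - r₀) + 1 := by omega
          rw [h1, hist_succ]
          have h2 : shift ρ r₀ (t + 1 - r₀) = ρ (t + 1) := by
            show ρ (r₀ + (t + 1 - r₀)) = ρ (t + 1)
            congr 1
            omega
          rw [h2]
      have hplayτ : PlayIn E (U \ attr E c b U (Xof m')) (shift ρ r₀) := by
        refine ⟨fun i => ?_, fun i => hplay.2 _⟩
        have := hVr (r₀ + i) (by omega)
        rwa [hVof] at this
      have hconτ : Con c b (σof m') (shift ρ r₀) := by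
        intro j hj
        have h2 := hconEq (r₀ + j) hj
        rw [htop (r₀ + j) (by omega)] at h2
        rw [if_pos (hVr (r₀ + j) (by omega))] at h2
        rw [hglinv (r₀ + j) (by omega)] at h2
        have harith : r₀ + j + 1 - r₀ = j + 1 := by omega
        rw [harith, hist_succ, List.dropLast_concat] at h2
        show ρ (r₀ + (j + 1)) = _
        rw [show r₀ + (j + 1) = r₀ + j + 1 from rfl, h2]
        rfl
      have hgood' := hσW m' (shift ρ r₀ 0) (by
          have := hVr r₀ le_rfl
          rw [hVof] at this
          exact this) (shift ρ r₀) hplayτ rfl hconτ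
      rwa [infOcc_shift] at hgood'
    · -- CASE A : the mode is unbounded, every `Xof j` is visited infinitely often
      push_neg at hbdd
      apply hgood _ (infOcc_subset hplay.1)
      intro j hj
      have hoften : ∀ N, ∃ t, N ≤ t ∧ ρ t ∈ Xof j := by
        intro N
        set v := j + k * (md N + 1) with hv
        have hvk : v % k = j := by
          rw [hv, Nat.add_mul_mod_self_left, Nat.mod_eq_of_lt hj]
        have hkmul : md N + 1 ≤ k * (md N + 1) := Nat.le_mul_of_pos_left _ hk
        have hvN : md N < v := by omega
        have hv1 : 1 ≤ v := by omega
        obtain ⟨t', hvt'⟩ := hbdd v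
        have hex : ∃ t, v < md t := ⟨t', hvt'⟩
        have hmdts : v < md (Nat.find hex) := Nat.find_spec hex
        have htsmin : ∀ i, i < Nat.find hex → ¬ v < md i := fun i hi => Nat.find_min hex hi
        have hts0 : Nat.find hex ≠ 0 := by
          intro h0
          rw [h0] at hmdts
          have := hmono 0 N (by omega)
          omega
        obtain ⟨u, hu⟩ : ∃ u, Nat.find hex = u + 1 := ⟨Nat.find hex - 1, by omega⟩
        rw [hu] at hmdts
        have hmdu : md u ≤ v := by
          have := htsmin u (by omega)
          omega
        rcases hstep u with ⟨hxX, hb⟩ | ⟨-, hb⟩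
        · have hmdu' : md u = v := by omega
          refine ⟨u + 1, ?_, ?_⟩
          · by_contra hlt
            push_neg at hlt
            have := hmono (u + 1) N (by omega)
            omega
          · rw [hmdu'] at hxX
            rw [hXper v, hvk] at hxX
            exact hxX
        · omega
      obtain ⟨x, hx1, hx2⟩ := exists_infOcc_of_often hoften
      exact ⟨x, hx2, hx1⟩

/-! ### Determinacy, by induction on the number of states -/

theorem bool_eq_not' {b p : Bool} (h : ¬ b = p) : b = !p := by
  cases b <;> cases p <;> simp_all

theorem determined [Finite S] : ∀ (N : ℕ) (U : Set S), U.ncard ≤ N → Sub E U →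
    ∀ (b : Bool), ∀ s ∈ U, s ∈ WinIn E c F b U ∨ s ∈ WinIn E c F (!b) U := by
  intro N
  induction N with
  | zero =>
    intro U hcard hU b s hs
    have h0 : U.ncard = 0 := by omega
    rw [Set.ncard_eq_zero (Set.toFinite U)] at h0
    rw [h0] at hs
    cases hs
  | succ N ih =>
    intro U hcard hU
    obtain ⟨b₀, hGb⟩ : ∃ b, Good F b U := by
      by_cases hUF : U ∈ F
      · exact ⟨true, by simp [Good, hUF]⟩
      · exact ⟨false, by simp [Good, hUF]⟩
    have core : ∀ s ∈ U, s ∈ WinIn E c F b₀ U ∨ s ∈ WinIn E c F (!b₀) U := by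
      intro s hs
      set MB : Set (Set S) := {M | M ⊆ U ∧ Good F (!b₀) M ∧
        ∀ M', M ⊆ M' → M' ⊆ U → Good F (!b₀) M' → M' = M} with hMB
      have hMBfin : MB.Finite :=
        (Set.Finite.finite_subsets (Set.toFinite U)).subset (fun M hM => hM.1)
      have hLmem : ∀ M, M ∈ hMBfin.toFinset.toList ↔ M ∈ MB := by
        intro M
        rw [Finset.mem_toList, Set.Finite.mem_toFinset]
      set L := hMBfin.toFinset.toList with hLdef
      have hmaxext : ∀ M, M ⊆ U → Good F (!b₀) M → ∃ M', M ⊆ M' ∧ M' ∈ MB := by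
        intro M hMU hMg
        obtain ⟨M', hM'mem, hM'max⟩ := Set.Finite.exists_maximalFor id
          {M' | M ⊆ M' ∧ M' ⊆ U ∧ Good F (!b₀) M'}
          ((Set.Finite.finite_subsets (Set.toFinite U)).subset (fun X hX => hX.2.1))
          ⟨M, subset_refl M, hMU, hMg⟩
        refine ⟨M', hM'mem.1, hM'mem.2.1, hM'mem.2.2, ?_⟩
        intro M'' hsub hM''U hM''g
        exact Set.Subset.antisymm (hM'max (j := M'') ⟨hM'mem.1.trans hsub, hM''U, hM''g⟩ hsub) hsub
      by_cases hk0 : L.length = 0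
      · -- no bad subsets at all : any legal strategy wins for b₀
        refine Or.inl ⟨hs, fun _ x => dflt E U x, dflt_stratOn hU, ?_⟩
        intro ρ hplay h0 hcon
        by_contra hng
        have hbad : Good F (!b₀) (infOcc ρ) := good_of_not_good hng
        obtain ⟨M', hMM', hM'⟩ := hmaxext _ (infOcc_subset hplay.1) hbad
        have hmem : M' ∈ L := (hLmem M').2 hM'
        rw [List.eq_nil_of_length_eq_zero hk0] at hmem
        cases hmem
      · have hk : 0 < L.length := Nat.pos_of_ne_zero hk0
        set k := L.length with hkdef
        set Mof : ℕ → Set S := fun m => L.getD (m % k) ∅ with hMof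
        have hMofMB : ∀ m, Mof m ∈ MB := by
          intro m
          have hmk : m % k < k := Nat.mod_lt _ hk
          rw [hMof]
          dsimp only
          rw [List.getD_eq_getElem L ∅ hmk]
          exact (hLmem _).1 (List.getElem_mem hmk)
        have hMper : ∀ m, Mof m = Mof (m % k) := by
          intro m
          rw [hMof]
          dsimp only
          congr 1
          exact (Nat.mod_mod_of_dvd m dvd_rfl).symm
        have hcover : ∀ M, M ⊆ U → Good F (!b₀) M → ∃ j, j < k ∧ M ⊆ Mof j := by
          intro M hMU hMg
          obtain ⟨M', hMM', hM'MB⟩ := hmaxext M hMU hMg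
          have hmem : M' ∈ L := (hLmem M').2 hM'MB
          obtain ⟨j, hjk, hgot⟩ := List.getElem_of_mem hmem
          refine ⟨j, hjk, ?_⟩
          rw [hMof]
          dsimp only
          rw [Nat.mod_eq_of_lt hjk, List.getD_eq_getElem L ∅ hjk, hgot]
          exact hMM'
        have hXne : ∀ m, ∃ x, x ∈ U \ Mof m := by
          intro m
          have hMB' := hMofMB m
          by_contra hempty
          push_neg at hempty
          have hUM : U ⊆ Mof m := fun x hx => by_contra fun hnx => (hempty x ⟨hx, hnx⟩)
          have heq : Mof m = U := Set.Subset.antisymm hMB'.1 hUM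
          exact good_not_both hGb (heq ▸ hMB'.2.1)
        have hVsub : ∀ m, Sub E (U \ attr E c b₀ U (U \ Mof m)) :=
          fun m => sub_diff E c b₀ U _ hU
        have hVcard : ∀ m, (U \ attr E c b₀ U (U \ Mof m)).ncard ≤ N := by
          intro m
          obtain ⟨x, hx⟩ := hXne m
          have hxA : x ∈ attr E c b₀ U (U \ Mof m) := subset_attr E c b₀ U _ hx
          have hss : (U \ attr E c b₀ U (U \ Mof m)) ⊂ U := by
            constructor
            · exact Set.diff_subset
            · intro hsub
              exact (hsub hx.1).2 hxA
          have := Set.ncard_lt_ncard hss (Set.toFinite U)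
          omega
        have hdet : ∀ m, ∀ (b : Bool), ∀ v ∈ (U \ attr E c b₀ U (U \ Mof m)),
            v ∈ WinIn E c F b (U \ attr E c b₀ U (U \ Mof m)) ∨
            v ∈ WinIn E c F (!b) (U \ attr E c b₀ U (U \ Mof m)) :=
          fun m b v hv => ih _ (hVcard m) (hVsub m) b v hv
        by_cases hW : ∃ j, j < k ∧
            ∃ w, w ∈ WinIn E c F (!b₀) (U \ attr E c b₀ U (U \ Mof j))
        · -- some subgame has a nonempty region for the opponent
          obtain ⟨j, hjk, w, hw⟩ := hW
          have htrap1 : ∀ x ∈ (U \ attr E c b₀ U (U \ Mof j)), ¬ c x = !b₀ →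
              ∀ t ∈ U, E x t → t ∈ (U \ attr E c b₀ U (U \ Mof j)) := by
            intro x hx hcx t htU htE
            have hcb : c x = b₀ := by
              have := bool_eq_not' hcx
              simpa using this
            exact ⟨htU, not_attr_own E c b₀ U _ hx.1 hx.2 hcb t htU htE⟩
          have hstep1 : WinIn E c F (!b₀) (U \ attr E c b₀ U (U \ Mof j)) ⊆
              WinIn E c F (!b₀) U := winIn_trap Set.diff_subset hU htrap1
          set W' := WinIn E c F (!b₀) (U \ attr E c b₀ U (U \ Mof j)) with hW'def
          have hW'U : W' ⊆ U := fun x hx => (winIn_subset hx).1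
          obtain ⟨σB, hσBS, hσBW⟩ := uniformize hU (fun w' hw' => (hstep1 hw').2)
          -- the attractor of W' for !b₀ is winning for !b₀
          have hstep3 : ∀ x ∈ attr E c (!b₀) U W', x ∈ WinIn E c F (!b₀) U := by
            intro x hx
            refine switch hU hσBS (attrMove_stratOn E c (!b₀) U W' hU) hσBW
              (attr_sub E c (!b₀) U W' hW'U hx) ?_
            intro ρ hplay h0 hcon hav
            exfalso
            have hmv : ∀ t, ρ t ∈ attr E c (!b₀) U W' → ρ t ∉ W' → c (ρ t) = !b₀ →
                ρ (t + 1) = attrMove E c (!b₀) U W' (ρ t) := by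
              intro t hta htw hct
              exact hcon t hct
            obtain ⟨t, ht⟩ := attr_reach E c (!b₀) U W' hplay (by rw [h0]; exact hx) hmv
            exact hav t ht
          obtain ⟨σB2, hσB2S, hσB2W⟩ := uniformize hU (fun x hx => (hstep3 x hx).2)
          have hU' : Sub E (U \ attr E c (!b₀) U W') := sub_diff E c (!b₀) U W' hU
          have hU'card : (U \ attr E c (!b₀) U W').ncard ≤ N := by
            have hwB : w ∈ attr E c (!b₀) U W' := subset_attr E c (!b₀) U W' hw
            have hss : (U \ attr E c (!b₀) U W') ⊂ U := by
              constructor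
              · exact Set.diff_subset
              · intro hsub
                exact (hsub (hW'U hw)).2 hwB
            have := Set.ncard_lt_ncard hss (Set.toFinite U)
            omega
          have hdet' := ih _ hU'card hU'
          have htrapb : ∀ x ∈ (U \ attr E c (!b₀) U W'), ¬ c x = b₀ →
              ∀ t ∈ U, E x t → t ∈ (U \ attr E c (!b₀) U W') := by
            intro x hx hcx t htU htE
            have hcnb : c x = !b₀ := bool_eq_not' hcx
            exact ⟨htU, not_attr_own E c (!b₀) U W' hx.1 hx.2 hcnb t htU htE⟩
          have htransb : WinIn E c F b₀ (U \ attr E c (!b₀) U W') ⊆ WinIn E c F b₀ U :=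
            winIn_trap Set.diff_subset hU htrapb
          have htransnb : ∀ x ∈ WinIn E c F (!b₀) (U \ attr E c (!b₀) U W'),
              x ∈ WinIn E c F (!b₀) U := by
            intro x hx
            obtain ⟨hxU', σ', hσ'S, hσ'W⟩ := hx
            refine switch hU hσB2S (σ0 := fun h y => if y ∈ (U \ attr E c (!b₀) U W')
              then σ' h y else dflt E U y) ?_ hσB2W hxU'.1 ?_
            · intro h y hyU hcy
              dsimp only
              by_cases hyU' : y ∈ (U \ attr E c (!b₀) U W')
              · rw [if_pos hyU']
                exact ⟨(hσ'S h y hyU' hcy).1.1, (hσ'S h y hyU' hcy).2⟩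
              · rw [if_neg hyU']
                exact dflt_spec hU hyU
            · intro ρ hplay h0 hcon hav
              have hmemU' : ∀ t, ρ t ∈ (U \ attr E c (!b₀) U W') := by
                intro t
                induction t with
                | zero => rw [h0]; exact hxU'
                | succ t iht =>
                  by_cases hct : c (ρ t) = !b₀
                  · have hc2 := hcon t hct
                    rw [hc2]
                    dsimp only
                    rw [if_pos iht]
                    exact (hσ'S _ _ iht hct).1
                  · exact ⟨hplay.1 (t + 1), hav (t + 1)⟩
              have hconσ' : Con c (!b₀) σ' ρ := by
                intro t hct
                have hc2 := hcon t hct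
                rw [hc2]
                dsimp only
                rw [if_pos (hmemU' t)]
              exact hσ'W ρ ⟨hmemU', hplay.2⟩ h0 hconσ'
          by_cases hsB : s ∈ attr E c (!b₀) U W'
          · exact Or.inr (hstep3 s hsB)
          · rcases hdet' b₀ s ⟨hs, hsB⟩ with h | h
            · exact Or.inl (htransb h)
            · exact Or.inr (htransnb _ h)
        · -- rotation case : b₀ wins everywhere
          push_neg at hW
          have hallb : ∀ m, ∀ v ∈ (U \ attr E c b₀ U (U \ Mof m)),
              v ∈ WinIn E c F b₀ (U \ attr E c b₀ U (U \ Mof m)) := by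
            intro m v hv
            rcases hdet m b₀ v hv with h | h
            · exact h
            · exfalso
              rw [hMper m] at h
              exact hW (m % k) (Nat.mod_lt _ hk) v h
          have hσ : ∀ m, ∃ σ, StratOn E c b₀ (U \ attr E c b₀ U (U \ Mof m)) σ ∧
              ∀ v ∈ (U \ attr E c b₀ U (U \ Mof m)),
                WinsFrom E c F b₀ (U \ attr E c b₀ U (U \ Mof m)) σ v :=
            fun m => uniformize (hVsub m) (fun v hv => (hallb m v hv).2)
          choose σof hσS hσW using hσ
          have hgoodX : ∀ I : Set S, I ⊆ U → (∀ j, j < k → ∃ x, x ∈ I ∧ x ∈ U \ Mof j) →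
              Good F b₀ I := by
            intro I hIU hmeet
            by_contra hng
            obtain ⟨j, hjk, hIMj⟩ := hcover I hIU (good_of_not_good hng)
            obtain ⟨x, hxI, hxX⟩ := hmeet j hjk
            exact hxX.2 (hIMj hxI)
          exact Or.inl (rotation hU hk (fun m => U \ Mof m)
            (fun m => by show U \ Mof m = U \ Mof (m % k); rw [hMper m]) hgoodX σof hσS hσW hs)
    intro b s hs
    by_cases hbb : b = b₀
    · rw [hbb]
      exact core s hs
    · have hbn : b = !b₀ := bool_eq_not' hbb
      rw [hbn, Bool.not_not]
      exact (core s hs).symm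

theorem good_true {F : Set (Set S)} {X : Set S} : Good F true X ↔ X ∈ F := by simp [Good]

theorem good_false {F : Set (Set S)} {X : Set S} : Good F false X ↔ X ∉ F := by simp [Good]

end MullerDet

end

/-- Determinacy of winning regions for Muller objectives:
`⟨⟨I⟩⟩(φ) = S \ ⟨⟨J⟩⟩(¬φ)` with `J = [1,n] \ I`. -/
theorem win_determinacy {n : ℕ} {S : Type*} [Fintype S]
    (A : Arena n S) (φ : Set (ℕ → S)) (hφ : IsMuller φ) (I : Set (Fin n)) :
    A.Win I φ = (A.Win Iᶜ φᶜ)ᶜ := by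
  classical
  obtain ⟨F, hF⟩ := hφ
  set c : S → Bool := fun x => decide (A.owner x ∈ I) with hc
  have hcT : ∀ x : S, c x = true ↔ A.owner x ∈ I := by
    intro x
    rw [hc]
    exact decide_eq_true_iff
  have hcF : ∀ x : S, c x = false ↔ A.owner x ∈ Iᶜ := by
    intro x
    rw [hc]
    constructor
    · intro h
      exact of_decide_eq_false h
    · intro h
      exact decide_eq_false h
  have hSub : MullerDet.Sub A.E (Set.univ : Set S) := by
    intro s _
    obtain ⟨t, ht⟩ := A.succ_exists s
    exact ⟨t, Set.mem_univ t, ht⟩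
  -- translation for coalition I and player `true`
  have htrans1 : ∀ s : S, s ∈ A.Win I φ ↔
      s ∈ MullerDet.WinIn A.E c F true Set.univ := by
    intro s
    constructor
    · rintro ⟨σ, hσ, hout⟩
      refine ⟨Set.mem_univ s,
        fun h x => if A.owner x ∈ I then σ (A.owner x) h x else MullerDet.dflt A.E Set.univ x,
        ?_, ?_⟩
      · intro h x _ hcx
        have hI : A.owner x ∈ I := (hcT x).1 hcx
        dsimp only
        rw [if_pos hI]
        exact ⟨Set.mem_univ _, hσ (A.owner x) hI h x⟩
      · intro ρ hplay h0 hcon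
        rw [MullerDet.good_true]
        have hmem : ρ ∈ A.OutP I σ s := by
          refine ⟨h0, hplay.2, ?_⟩
          intro i hi k hk
          have hcx : c (ρ k) = true := (hcT (ρ k)).2 (hk ▸ hi)
          have := hcon k hcx
          rw [this]
          dsimp only
          rw [if_pos (hk ▸ hi : A.owner (ρ k) ∈ I), hk]
        have := hout hmem
        rw [hF] at this
        exact this
    · rintro ⟨-, τ, hτS, hτW⟩
      refine ⟨fun _ => fun h x =>
        if A.owner x ∈ I then τ h x else MullerDet.dflt A.E Set.univ x, ?_, ?_⟩
      · intro i _ h x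
        by_cases hI : A.owner x ∈ I
        · dsimp only
          rw [if_pos hI]
          exact (hτS h x (Set.mem_univ x) ((hcT x).2 hI)).2
        · dsimp only
          rw [if_neg hI]
          exact (MullerDet.dflt_spec hSub (Set.mem_univ x)).2
      · rintro ρ ⟨h0, hplay, hcons⟩
        have hgood : MullerDet.Good F true (infOcc ρ) := by
          apply hτW ρ ⟨fun k => Set.mem_univ _, hplay⟩ h0
          intro k hk
          have hI : A.owner (ρ k) ∈ I := (hcT (ρ k)).1 hk
          have := hcons (A.owner (ρ k)) hI k rfl
          rw [this]
          dsimp only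
          rw [if_pos hI]
        rw [hF]
        exact (MullerDet.good_true).1 hgood
  -- translation for coalition Iᶜ and player `false`
  have htrans2 : ∀ s : S, s ∈ A.Win Iᶜ φᶜ ↔
      s ∈ MullerDet.WinIn A.E c F false Set.univ := by
    intro s
    constructor
    · rintro ⟨σ, hσ, hout⟩
      refine ⟨Set.mem_univ s,
        fun h x => if A.owner x ∈ Iᶜ then σ (A.owner x) h x else MullerDet.dflt A.E Set.univ x,
        ?_, ?_⟩
      · intro h x _ hcx
        have hI : A.owner x ∈ Iᶜ := (hcF x).1 hcx
        dsimp only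
        rw [if_pos hI]
        exact ⟨Set.mem_univ _, hσ (A.owner x) hI h x⟩
      · intro ρ hplay h0 hcon
        rw [MullerDet.good_false]
        have hmem : ρ ∈ A.OutP Iᶜ σ s := by
          refine ⟨h0, hplay.2, ?_⟩
          intro i hi k hk
          have hcx : c (ρ k) = false := (hcF (ρ k)).2 (hk ▸ hi)
          have := hcon k hcx
          rw [this]
          dsimp only
          rw [if_pos (hk ▸ hi : A.owner (ρ k) ∈ Iᶜ), hk]
        have := hout hmem
        rw [hF] at this
        exact this
    · rintro ⟨-, τ, hτS, hτW⟩
      refine ⟨fun _ => fun h x =>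
        if A.owner x ∈ Iᶜ then τ h x else MullerDet.dflt A.E Set.univ x, ?_, ?_⟩
      · intro i _ h x
        by_cases hI : A.owner x ∈ Iᶜ
        · dsimp only
          rw [if_pos hI]
          exact (hτS h x (Set.mem_univ x) ((hcF x).2 hI)).2
        · dsimp only
          rw [if_neg hI]
          exact (MullerDet.dflt_spec hSub (Set.mem_univ x)).2
      · rintro ρ ⟨h0, hplay, hcons⟩
        have hgood : MullerDet.Good F false (infOcc ρ) := by
          apply hτW ρ ⟨fun k => Set.mem_univ _, hplay⟩ h0
          intro k hk
          have hI : A.owner (ρ k) ∈ Iᶜ := (hcF (ρ k)).1 hk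
          have := hcons (A.owner (ρ k)) hI k rfl
          rw [this]
          dsimp only
          rw [if_pos hI]
        rw [MullerDet.good_false] at hgood
        rw [hF]
        exact hgood
  ext s
  simp only [Set.mem_compl_iff]
  constructor
  · intro h1 h2
    have hw1 := (htrans1 s).1 h1
    have hw2 := (htrans2 s).1 h2
    exact MullerDet.winIn_not_both (p := true) hw1 (by simpa using hw2)
  · intro h2
    rcases MullerDet.determined (E := A.E) (c := c) (F := F)
      (Set.univ : Set S).ncard Set.univ le_rfl hSub true s (Set.mem_univ s) with h | h
    · exact (htrans1 s).2 h
    · exfalso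
      exact h2 ((htrans2 s).2 (by simpa using h))
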